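/- Let k be a field and A a k-algebra. Let M be a nonzero A-module of finite length such that rad(M), the intersection of all maximal submodules of M, is a semisimple A-module and M/rad(M) is simple, isomorphic to a simple module τ. Assume that Ext¹_A(τ, τ) = 0 and that dim_k Ext¹_A(τ, σ) ≤ 1 for every simple A-module σ, where Ext¹_A is computed in the category of A-modules with its natural k-vector space structure. Then M is multiplicity free, i.e. the Jordan–Hölder factors of M are pairwise non-isomorphic. -/

import Mathlib

open CategoryTheory Opposite

universe u v

/-- An isomorphism `X₂ / X₁ ∩ X₂ ≅ Y₂ / Y₁ ∩ Y₂` of modules for pairs `(X₁,X₂) (Y₁,Y₂) : Submodule R M`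
(the definition removed from Mathlib, restored with its old meaning). -/
def JordanHolderModule.Iso {R M : Type*} [Ring R] [AddCommGroup M] [Module R M]
    (X Y : Submodule R M × Submodule R M) : Prop :=
  Nonempty <| (X.2 ⧸ X.1.comap X.2.subtype) ≃ₗ[R] Y.2 ⧸ Y.1.comap Y.2.subtype

/-- An `A`-module `M` is *multiplicity free* if it admits a composition series (from `⊥` to `⊤`)
whose factors (its Jordan–Hölder factors) are pairwise non-isomorphic. -/
def MultiplicityFree (A M : Type*) [Ring A] [AddCommGroup M] [Module A M] : Prop :=
  ∃ s : CompositionSeries (Submodule A M), s.head = ⊥ ∧ s.last = ⊤ ∧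
    ∀ i j : Fin s.length, i ≠ j →
      ¬ JordanHolderModule.Iso (s i.castSucc, s i.succ) (s j.castSucc, s j.succ)

/-- The radical of a module: the intersection of all maximal submodules. -/
def moduleRadical (A M : Type*) [Ring A] [AddCommGroup M] [Module A M] : Submodule A M :=
  sInf {N : Submodule A M | IsCoatom N}

theorem JordanHolderModule.iso_symm {R M : Type*} [Ring R] [AddCommGroup M] [Module R M]
    {X Y : Submodule R M × Submodule R M} :
    JordanHolderModule.Iso X Y → JordanHolderModule.Iso Y X :=
  fun ⟨f⟩ => ⟨f.symm⟩

theorem JordanHolderModule.iso_trans {R M : Type*} [Ring R] [AddCommGroup M] [Module R M]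
    {X Y Z : Submodule R M × Submodule R M} :
    JordanHolderModule.Iso X Y → JordanHolderModule.Iso Y Z → JordanHolderModule.Iso X Z :=
  fun ⟨f⟩ ⟨g⟩ => ⟨f.trans g⟩

theorem JordanHolderModule.second_iso {R M : Type*} [Ring R] [AddCommGroup M] [Module R M]
    {X Y : Submodule R M} (_ : X ⋖ X ⊔ Y) :
    JordanHolderModule.Iso (X, X ⊔ Y) (X ⊓ Y, Y) := by
  constructor
  rw [sup_comm, inf_comm]
  dsimp
  exact (LinearMap.quotientInfEquivSupQuotient Y X).symm

section ExtFact
variable {k : Type v} [Field k] {A : Type u} [Ring A] [Algebra k A]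
variable {M : Type u} [AddCommGroup M] [Module A M]
variable (τ σ : Type u) [AddCommGroup τ] [Module A τ] [AddCommGroup σ] [Module A σ]

/-- Scalar multiplication by `algebraMap k A a` as an `A`-linear endomorphism. -/
def centralSmul (a : k) : σ →ₗ[A] σ where
  toFun x := algebraMap k A a • x
  map_add' x y := smul_add _ x y
  map_smul' r x := by
    simp only [RingHom.id_apply, smul_smul, Algebra.commutes]

theorem extFact (N : Submodule A M) (hNtop : N ≠ ⊤)
    (hNall : ∀ W : Submodule A M, W ≠ ⊤ → W ≤ N)
    [IsSimpleModule A σ] (e : (M ⧸ N) ≃ₗ[A] τ) :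
    ∃ Φ : (↥N →ₗ[A] σ) → (((Ext k (ModuleCat.{u} A) 1).obj (op (ModuleCat.of A τ))).obj
        (ModuleCat.of A σ)).carrier,
      (∀ f, Φ f = 0 → f = 0) ∧ (∀ f g, Φ (f + g) = Φ f + Φ g) ∧
      (∀ (a : k) (f), Φ ((centralSmul σ a).comp f) = a • Φ f) := by
  classical
  let τc : ModuleCat.{u} A := ModuleCat.of A τ
  let σc : ModuleCat.{u} A := ModuleCat.of A σ
  let Mc : ModuleCat.{u} A := ModuleCat.of A M
  let P : CategoryTheory.ProjectiveResolution τc := (HasProjectiveResolution.out (Z := τc)).some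
  let T0 := ((ChainComplex.single₀ (ModuleCat.{u} A)).obj τc).X 0
  let q : Mc ⟶ T0 := ModuleCat.ofHom (e.toLinearMap.comp N.mkQ : M →ₗ[A] τ)
  have hkerq : ∀ x : M, q x = 0 ↔ x ∈ N := by
    intro x
    constructor
    · intro h
      have : e (Submodule.Quotient.mk x) = 0 := h
      have h2 : (Submodule.Quotient.mk x : M ⧸ N) = 0 := by
        apply e.injective; simpa using this
      simpa [Submodule.Quotient.mk_eq_zero] using h2
    · intro h
      show e (Submodule.Quotient.mk x) = 0
      rw [(Submodule.Quotient.mk_eq_zero N).2 h, map_zero]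
  let π₀ : P.complex.X 0 ⟶ T0 := P.π.f 0
  have hepi : Epi q := by
    rw [ModuleCat.epi_iff_surjective]
    exact e.surjective.comp (Submodule.mkQ_surjective N)
  let α₀ : P.complex.X 0 ⟶ Mc := Projective.factorThru π₀ q
  have hα₀ : ∀ p, q (α₀ p) = π₀ p := fun p =>
    ConcreteCategory.congr_hom (Projective.factorThru_comp π₀ q) p
  -- exactness at degree 0
  have hex : ∀ x : P.complex.X 0, π₀ x = 0 → ∃ y, P.complex.d 1 0 y = x := by
    have := P.exact₀
    rw [ShortComplex.moduleCat_exact_iff] at this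
    exact this
  -- τ is nontrivial
  have hτnt : Nontrivial τ := by
    have : Nontrivial (M ⧸ N) := (Submodule.Quotient.nontrivial_iff (p := N)).2 (lt_top_iff_ne_top.2 hNtop).ne
    exact e.toEquiv.symm.nontrivial
  -- α₀ is surjective
  have hsurj : Function.Surjective α₀ := by
    by_contra hc
    have hW : LinearMap.range α₀.hom ≠ ⊤ := by
      intro h
      exact hc (LinearMap.range_eq_top.mp h)
    have hle := hNall _ hW
    have hzero : ∀ p, π₀ p = 0 := by
      intro p
      rw [← hα₀ p, (hkerq _).2 (hle ⟨p, rfl⟩)]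
    have hps : Function.Surjective π₀ := by
      rw [← ModuleCat.epi_iff_surjective]; infer_instance
    have hT0 : Nontrivial T0 := hτnt
    obtain ⟨x, y, hxy⟩ := hT0
    obtain ⟨p, hp⟩ := hps x
    obtain ⟨p', hp'⟩ := hps y
    rw [hzero] at hp hp'
    exact hxy (hp.symm.trans hp')
  have hd10π : ∀ x, π₀ (P.complex.d 1 0 x) = 0 := fun x =>
    ConcreteCategory.congr_hom P.complex_d_comp_π_f_zero x
  -- α₁ : P₁ → N
  have hmem : ∀ x : P.complex.X 1, α₀ (P.complex.d 1 0 x) ∈ N := by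
    intro x
    rw [← hkerq, hα₀, hd10π]
  let α₁ : P.complex.X 1 →ₗ[A] ↥N :=
    LinearMap.codRestrict N (α₀.hom.comp
      (P.complex.d 1 0).hom) hmem
  let K := P.complex.linearYonedaObj k σc
  let S := K.sc' 0 1 2
  -- cocycles
  have hcoc : ∀ f : ↥N →ₗ[A] σ, S.g (ModuleCat.ofHom (f.comp α₁ : P.complex.X 1 →ₗ[A] σ) : P.complex.X 1 ⟶ σc) = 0 := by
    intro f
    have h1 : S.g (ModuleCat.ofHom (f ∘ₗ α₁)) = P.complex.d 2 1 ≫ (ModuleCat.ofHom (f ∘ₗ α₁)) := rfl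
    rw [h1]
    apply ModuleCat.hom_ext
    apply LinearMap.ext
    intro x
    show f (α₁ (P.complex.d 2 1 x)) = 0
    have : α₁ (P.complex.d 2 1 x) = 0 := by
      apply Subtype.ext
      show α₀ (P.complex.d 1 0 (P.complex.d 2 1 x)) = 0
      have := ConcreteCategory.congr_hom (P.complex.d_comp_d 2 1 0) x
      rw [show P.complex.d 1 0 (P.complex.d 2 1 x) = 0 from this, map_zero]
    rw [this, map_zero]
  let coc : (↥N →ₗ[A] σ) → ↥(LinearMap.ker S.g.hom) := fun f =>
    ⟨(ModuleCat.ofHom (f.comp α₁ : P.complex.X 1 →ₗ[A] σ) : P.complex.X 1 ⟶ σc), LinearMap.mem_ker.2 (hcoc f)⟩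
  let Φ₀ : (↥N →ₗ[A] σ) → S.moduleCatLeftHomologyData.H := fun f => Submodule.Quotient.mk (coc f)
  let E1 : ((Ext k (ModuleCat.{u} A) 1).obj (op τc)).obj σc ≅ K.homology 1 := P.isoExt 1 σc
  let E2 : K.homology 1 ≅ S.homology := K.homologyIsoSc' 0 1 2 (by simp) (by simp)
  let E3 : S.homology ≅ S.moduleCatLeftHomologyData.H := S.moduleCatHomologyIso
  let EL := (E1 ≪≫ E2 ≪≫ E3).toLinearEquiv
  refine ⟨fun f => EL.symm (Φ₀ f), ?_, ?_, ?_⟩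
  · -- injectivity on kernel
    intro f hf
    have hf0 : Φ₀ f = 0 := by
      have := congrArg EL hf
      simpa using this
    have hmemr : coc f ∈ LinearMap.range S.moduleCatToCycles :=
      (Submodule.Quotient.mk_eq_zero _).1 hf0
    obtain ⟨y0, hy⟩ := hmemr
    let y : P.complex.X 0 ⟶ σc := y0
    have hcv : (S.f y0 : ↑(K.X 1)) = (ModuleCat.ofHom (f ∘ₗ α₁ : ↑(P.complex.X 1) →ₗ[A] σ) : K.X 1) :=
      congrArg Subtype.val hy
    have hy' : ∀ z, y (P.complex.d 1 0 z) = f (α₁ z) := by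
      intro z
      exact ConcreteCategory.congr_hom hcv z
    -- define g : M →ₗ[A] σ extending f
    have key : ∀ p p' : P.complex.X 0, α₀ p = α₀ p' → y p = y p' := by
      intro p p' hpp
      have h1 : α₀ (p - p') = 0 := by rw [map_sub, hpp, sub_self]
      have h2 : π₀ (p - p') = 0 := by rw [← hα₀, h1, map_zero]
      obtain ⟨z, hz⟩ := hex _ h2
      have hα₁z : α₁ z = 0 := by
        apply Subtype.ext
        show α₀ (P.complex.d 1 0 z) = 0
        rw [hz, h1]
      have h5 : y (p - p') = 0 := by rw [← hz, hy', hα₁z, map_zero]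
      calc y p = y (p - p' + p') := by rw [sub_add_cancel]
        _ = y (p - p') + y p' := map_add y.hom _ _
        _ = y p' := by rw [h5, zero_add]
    let g : M →ₗ[A] σ :=
      { toFun := fun m => y (Function.surjInv hsurj m)
        map_add' := by
          intro m m'
          show y (Function.surjInv hsurj (m + m')) =
            y (Function.surjInv hsurj m) + y (Function.surjInv hsurj m')
          have h4 : α₀ (Function.surjInv hsurj (m + m')) =
              α₀ (Function.surjInv hsurj m + Function.surjInv hsurj m') := by
            rw [map_add α₀.hom, Function.surjInv_eq hsurj, Function.surjInv_eq hsurj,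
              Function.surjInv_eq hsurj]
          rw [key _ _ h4, map_add y.hom]
        map_smul' := by
          intro r m
          show y (Function.surjInv hsurj (r • m)) = r • y (Function.surjInv hsurj m)
          have h4 : α₀ (Function.surjInv hsurj (r • m)) =
              α₀ (r • Function.surjInv hsurj m) := by
            rw [map_smul α₀.hom, Function.surjInv_eq hsurj, Function.surjInv_eq hsurj]
          rw [key _ _ h4, map_smul y.hom] }
    have hg : ∀ p, g (α₀ p) = y p := by
      intro p
      apply key
      exact Function.surjInv_eq hsurj (α₀ p)
    have hfg : ∀ x : ↥N, f x = g (x : M) := by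
      intro x
      obtain ⟨p, hp⟩ := hsurj (x : M)
      have hπp : π₀ p = 0 := by rw [← hα₀, hp, (hkerq _).2 x.2]
      obtain ⟨z, hz⟩ := hex _ hπp
      have hα₁z : α₁ z = x := by
        apply Subtype.ext
        show α₀ (P.complex.d 1 0 z) = (x : M)
        rw [hz, hp]
      rw [← hα₁z, ← hy' z]
      show y (P.complex.d 1 0 z) = g (α₀ (P.complex.d 1 0 z))
      rw [hg]
    by_contra hfne
    have hgne : g ≠ 0 := by
      intro h
      apply hfne
      ext x
      rw [hfg, h]
      rfl
    have hrg : LinearMap.range g = ⊤ := by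
      rcases eq_bot_or_eq_top (LinearMap.range g) with h | h
      · exact absurd (LinearMap.range_eq_bot.1 h) hgne
      · exact h
    have hgsurj : Function.Surjective g := LinearMap.range_eq_top.1 hrg
    have hco : IsCoatom (LinearMap.ker g) := by
      rw [← isSimpleModule_iff_isCoatom]
      exact IsSimpleModule.congr (LinearMap.quotKerEquivOfSurjective g hgsurj)
    have hkN : LinearMap.ker g = N := by
      have hle := hNall _ hco.1
      rcases eq_or_lt_of_le hle with h | h
      · exact h
      · exact absurd (hco.2 _ h) hNtop
    apply hfne
    ext x
    rw [hfg]
    show g (x : M) = 0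
    rw [← LinearMap.mem_ker, hkN]
    exact x.2
  · intro f g
    have h6 : coc (f + g) = coc f + coc g := Subtype.ext (ModuleCat.hom_ext (LinearMap.ext fun z => rfl))
    have h5 : Φ₀ (f + g) = Φ₀ f + Φ₀ g := by
      show Submodule.Quotient.mk (coc (f + g)) =
        Submodule.Quotient.mk (coc f) + Submodule.Quotient.mk (coc g)
      rw [h6, Submodule.Quotient.mk_add]
      rfl
    show EL.symm (Φ₀ (f + g)) = EL.symm (Φ₀ f) + EL.symm (Φ₀ g)
    rw [h5, map_add]
  · intro a f
    have h6 : coc ((centralSmul σ a).comp f) = a • coc f := Subtype.ext (ModuleCat.hom_ext (LinearMap.ext fun z => rfl))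
    have h5 : Φ₀ ((centralSmul σ a).comp f) = a • Φ₀ f := by
      show Submodule.Quotient.mk (coc ((centralSmul σ a).comp f)) =
        a • Submodule.Quotient.mk (coc f)
      rw [h6, Submodule.Quotient.mk_smul]
      rfl
    show EL.symm (Φ₀ ((centralSmul σ a).comp f)) = a • EL.symm (Φ₀ f)
    rw [h5, map_smul]
end ExtFact

section Aux
variable {A : Type u} [Ring A] {M : Type u} [AddCommGroup M] [Module A M]

theorem algebra_smul_eq_zero' {k : Type v} [Field k] [Algebra k A]
    {V : Type*} [AddCommGroup V] [Module A V] {s : k} {w : V}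
    (h : algebraMap k A s • w = 0) (hw : w ≠ 0) : s = 0 := by
  by_contra hs
  apply hw
  have h2 : algebraMap k A s⁻¹ • (algebraMap k A s • w) = 0 := by rw [h, smul_zero]
  rwa [smul_smul, ← map_mul, inv_mul_cancel₀ hs, map_one, one_smul] at h2

theorem exists_atom_compl (N : Submodule A M) [ComplementedLattice (Submodule A ↥N)]
    {X Y : Submodule A M} (hXY : X ⋖ Y) (hYN : Y ≤ N) :
    ∃ C : Submodule A M, C ≤ N ∧ C ⊓ X = ⊥ ∧ C ⊔ X = Y ∧ IsAtom C ∧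
      JordanHolderModule.Iso (X, Y) (⊥, C) := by
  have hXN : X ≤ N := le_trans hXY.le hYN
  obtain ⟨c', hc'⟩ := exists_isCompl (X.comap N.subtype)
  set C : Submodule A M := (c' ⊓ Y.comap N.subtype).map N.subtype with hCdef
  have hmapx : (X.comap N.subtype).map N.subtype = X := by
    rw [Submodule.map_comap_subtype]; exact inf_eq_right.mpr hXN
  have hmapy : (Y.comap N.subtype).map N.subtype = Y := by
    rw [Submodule.map_comap_subtype]; exact inf_eq_right.mpr hYN
  have hcle : X.comap N.subtype ≤ Y.comap N.subtype := Submodule.comap_mono hXY.le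
  have h1 : (c' ⊓ Y.comap N.subtype) ⊓ X.comap N.subtype = ⊥ := by
    rw [inf_assoc, inf_eq_right.mpr hcle, disjoint_iff.mp hc'.disjoint.symm]
  have hinfC : C ⊓ X = ⊥ := by
    rw [hCdef, ← hmapx, ← Submodule.map_inf N.subtype N.injective_subtype, h1,
      Submodule.map_bot]
  have h2 : (c' ⊓ Y.comap N.subtype) ⊔ X.comap N.subtype = Y.comap N.subtype := by
    rw [sup_comm, ← sup_inf_assoc_of_le _ hcle, codisjoint_iff.mp hc'.codisjoint, top_inf_eq]
  have hsupC : C ⊔ X = Y := by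
    rw [hCdef, ← hmapx, ← Submodule.map_sup, h2, hmapy]
  have hCY : C ≤ Y := le_sup_left.trans hsupC.le
  have hatom : IsAtom C := by
    constructor
    · intro hC0
      rw [hC0, bot_sup_eq] at hsupC
      exact hXY.lt.ne hsupC
    · intro r hr
      by_cases hrX : r ⊔ X = Y
      · exfalso
        have hCr : C = r := by
          calc C = C ⊓ Y := (inf_eq_left.mpr hCY).symm
            _ = C ⊓ (X ⊔ r) := by rw [← hrX, sup_comm]
            _ = (C ⊓ X) ⊔ r := (inf_sup_assoc_of_le X hr.le).symm
            _ = r := by rw [hinfC, bot_sup_eq]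
        exact hr.ne' hCr
      · have hle : r ⊔ X ≤ Y := sup_le (hr.le.trans hCY) hXY.le
        have hXrX : r ⊔ X = X := by
          by_contra hne
          have h3 : X < r ⊔ X := lt_of_le_of_ne le_sup_right (fun h => hne h.symm)
          exact hXY.2 h3 (lt_of_le_of_ne hle hrX)
        have : r ≤ C ⊓ X := le_inf hr.le (le_sup_left.trans hXrX.le)
        rwa [hinfC, le_bot_iff] at this
  have hcov2 : X ⋖ X ⊔ C := by rw [sup_comm X C, hsupC]; exact hXY
  have hiso := JordanHolderModule.second_iso hcov2
  rw [sup_comm X C, hsupC, inf_comm X C, hinfC] at hiso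
  exact ⟨C, Submodule.map_subtype_le _ _, hinfC, hsupC, hatom, hiso⟩

theorem exists_proj (N : Submodule A M) [ComplementedLattice (Submodule A ↥N)]
    {C : Submodule A M} (hCN : C ≤ N) :
    ∃ f : ↥N →ₗ[A] ↥C, ∀ x : ↥N, (x : M) ∈ C → (f x : M) = (x : M) := by
  obtain ⟨d, hd⟩ := exists_isCompl (C.comap N.subtype)
  refine ⟨(Submodule.comapSubtypeEquivOfLe hCN).toLinearMap ∘ₗ
    Submodule.linearProjOfIsCompl _ d hd, ?_⟩
  intro x hx
  have hx' : x ∈ C.comap N.subtype := Submodule.mem_comap.mpr hx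
  have h1 : Submodule.linearProjOfIsCompl _ d hd x = ⟨x, hx'⟩ :=
    Submodule.linearProjOfIsCompl_apply_left hd ⟨x, hx'⟩
  show ((Submodule.comapSubtypeEquivOfLe hCN) (Submodule.linearProjOfIsCompl _ d hd x) : M) = _
  rw [h1, Submodule.comapSubtypeEquivOfLe_apply_coe]

theorem exists_proj_pair (N : Submodule A M) [ComplementedLattice (Submodule A ↥N)]
    {Ci Cj : Submodule A M} (hCiN : Ci ≤ N) (hCjN : Cj ≤ N) (hdisj : Ci ⊓ Cj = ⊥) :
    ∃ (fi : ↥N →ₗ[A] ↥Ci) (fj : ↥N →ₗ[A] ↥Cj),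
      (∀ x : ↥N, (x : M) ∈ Ci → (fi x : M) = (x : M) ∧ fj x = 0) ∧
      (∀ x : ↥N, (x : M) ∈ Cj → (fj x : M) = (x : M) ∧ fi x = 0) := by
  set a := Ci.comap N.subtype with ha
  set b := Cj.comap N.subtype with hb
  have hab : a ⊓ b = ⊥ := by
    rw [ha, hb, ← Submodule.comap_inf, hdisj, Submodule.comap_bot, Submodule.ker_subtype]
  obtain ⟨d, hd⟩ := exists_isCompl (a ⊔ b)
  have hcompl : ∀ {p q : Submodule A ↥N}, p ⊔ q = a ⊔ b → p ⊓ q = ⊥ → IsCompl p (q ⊔ d) := by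
    intro p q hpq hpq2
    constructor
    · rw [disjoint_iff]
      have h1 : p ⊓ (q ⊔ d) ≤ q := by
        calc p ⊓ (q ⊔ d) ≤ (p ⊔ q) ⊓ (q ⊔ d) := inf_le_inf_right _ le_sup_left
          _ = (q ⊔ d) ⊓ (p ⊔ q) := inf_comm _ _
          _ = q ⊔ (d ⊓ (p ⊔ q)) := sup_inf_assoc_of_le _ le_sup_right
          _ = q := by rw [hpq, disjoint_iff.mp hd.disjoint.symm, sup_bot_eq]
      have h2 : p ⊓ (q ⊔ d) ≤ p ⊓ q := le_inf inf_le_left h1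
      rw [hpq2, le_bot_iff] at h2
      exact h2
    · rw [codisjoint_iff, ← sup_assoc, hpq, codisjoint_iff.mp hd.codisjoint]
  have hca : IsCompl a (b ⊔ d) := hcompl rfl hab
  have hcb : IsCompl b (a ⊔ d) := hcompl (sup_comm _ _) (by rw [inf_comm, hab])
  refine ⟨(Submodule.comapSubtypeEquivOfLe hCiN).toLinearMap ∘ₗ
      Submodule.linearProjOfIsCompl _ _ hca,
    (Submodule.comapSubtypeEquivOfLe hCjN).toLinearMap ∘ₗ
      Submodule.linearProjOfIsCompl _ _ hcb, ?_, ?_⟩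
  · intro x hx
    have hx' : x ∈ a := Submodule.mem_comap.mpr hx
    constructor
    · have h1 : Submodule.linearProjOfIsCompl _ _ hca x = ⟨x, hx'⟩ :=
        Submodule.linearProjOfIsCompl_apply_left hca ⟨x, hx'⟩
      show ((Submodule.comapSubtypeEquivOfLe hCiN)
        (Submodule.linearProjOfIsCompl _ _ hca x) : M) = _
      rw [h1, Submodule.comapSubtypeEquivOfLe_apply_coe]
    · have h1 : Submodule.linearProjOfIsCompl _ _ hcb x = 0 :=
        Submodule.projectionOnto_apply_of_mem_right hcb (le_sup_left (a := a) (b := d) hx')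
      show (Submodule.comapSubtypeEquivOfLe hCjN)
        (Submodule.linearProjOfIsCompl _ _ hcb x) = 0
      rw [h1, map_zero]
  · intro x hx
    have hx' : x ∈ b := Submodule.mem_comap.mpr hx
    constructor
    · have h1 : Submodule.linearProjOfIsCompl _ _ hcb x = ⟨x, hx'⟩ :=
        Submodule.linearProjOfIsCompl_apply_left hcb ⟨x, hx'⟩
      show ((Submodule.comapSubtypeEquivOfLe hCjN)
        (Submodule.linearProjOfIsCompl _ _ hcb x) : M) = _
      rw [h1, Submodule.comapSubtypeEquivOfLe_apply_coe]
    · have h1 : Submodule.linearProjOfIsCompl _ _ hca x = 0 :=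
        Submodule.projectionOnto_apply_of_mem_right hca (le_sup_left (a := b) (b := d) hx')
      show (Submodule.comapSubtypeEquivOfLe hCiN)
        (Submodule.linearProjOfIsCompl _ _ hca x) = 0
      rw [h1, map_zero]
end Aux

/-- **Claim inside the proof of Lemma 4.3.5**: let `A` be an algebra over a field `k`, and `M` a
nonzero `A`-module of finite length whose radical `rad M` (the intersection of all maximal
submodules) is semisimple, with `M/rad M` simple and isomorphic to a simple module `τ`.  If
`Ext¹_A(τ, τ) = 0` and `dim_k Ext¹_A(τ, σ) ≤ 1` for every simple `A`-module `σ`, then `M` is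
multiplicity free. -/
theorem statement9 {k : Type v} [Field k] {A : Type u} [Ring A] [Algebra k A]
    (M : Type u) [AddCommGroup M] [Module A M] [Nontrivial M]
    (hfl : IsFiniteLength A M)
    (τ : Type u) [AddCommGroup τ] [Module A τ] [IsSimpleModule A τ]
    (hrad : IsSemisimpleModule A (moduleRadical A M))
    (hcosoc : Nonempty ((M ⧸ moduleRadical A M) ≃ₗ[A] τ))
    (hself : Subsingleton
      ((((Ext k (ModuleCat.{u} A) 1).obj (op (ModuleCat.of A τ))).obj
        (ModuleCat.of A τ)).carrier))
    (hext : ∀ (σ : Type u) [AddCommGroup σ] [Module A σ], IsSimpleModule A σ →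
      Module.rank k
        ((((Ext k (ModuleCat.{u} A) 1).obj (op (ModuleCat.of A τ))).obj
          (ModuleCat.of A σ)).carrier) ≤ 1) :
    MultiplicityFree A M := by
  obtain ⟨e⟩ := hcosoc
  set N : Submodule A M := moduleRadical A M with hNdef
  haveI : ComplementedLattice (Submodule A ↥N) := hrad.toComplementedLattice
  have hsimp : IsSimpleModule A (M ⧸ N) := IsSimpleModule.congr e
  have hco : IsCoatom N := isSimpleModule_iff_isCoatom.mp hsimp
  have hNtop : N ≠ ⊤ := hco.1
  haveI hNoeth : IsNoetherian A M := (isFiniteLength_iff_isNoetherian_isArtinian.mp hfl).1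
  have hcoatomic : IsCoatomic (Submodule A M) :=
    isCoatomic_of_orderTop_gt_wellFounded wellFounded_gt
  have huniq : ∀ W : Submodule A M, IsCoatom W → W = N := by
    intro W hW
    have hle : N ≤ W := sInf_le hW
    rcases eq_or_lt_of_le hle with h | h
    · exact h.symm
    · exact absurd (hco.2 _ h) hW.1
  have hNall : ∀ W : Submodule A M, W ≠ ⊤ → W ≤ N := by
    intro W hW
    rcases eq_top_or_exists_le_coatom W with h | ⟨m, hm, hle⟩
    · exact absurd h hW
    · exact le_trans hle (huniq m hm).le
  obtain ⟨t, ht0, ht1⟩ := isFiniteLength_iff_exists_compositionSeries.mp hfl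
  refine ⟨t, ht0, ht1, ?_⟩
  have htlast : t (Fin.last t.length) = ⊤ := ht1
  -- generic data for a non-top factor
  have hgen : ∀ i : Fin t.length, i.succ ≠ Fin.last t.length →
      ∃ C : Submodule A M, C ≤ N ∧ C ⊓ t i.castSucc = ⊥ ∧ C ⊔ t i.castSucc = t i.succ ∧
        IsAtom C ∧ JordanHolderModule.Iso (t i.castSucc, t i.succ) (⊥, C) := by
    intro i hi
    have hYN : t i.succ ≤ N := by
      apply hNall
      intro h
      have hlt : t i.succ < t (Fin.last _) :=
        t.strictMono (lt_of_le_of_ne (Fin.le_last _) hi)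
      rw [htlast, h] at hlt
      exact lt_irrefl _ hlt
    exact exists_atom_compl N (t.step i) hYN
  -- identification of the top factor
  have hlastfac : ∀ j : Fin t.length, j.succ = Fin.last t.length →
      t j.castSucc = N ∧ t j.succ = ⊤ := by
    intro j hj
    have hjs : t j.succ = ⊤ := by rw [hj]; exact htlast
    have hcov : t j.castSucc ⋖ ⊤ := by rw [← hjs]; exact t.step j
    exact ⟨huniq _ (covBy_top_iff.mp hcov), hjs⟩
  -- the equivalence extracted from an iso of bottom pairs
  have hbotpair : ∀ C : Submodule A M,
      Nonempty ((↥C ⧸ (⊥ : Submodule A M).comap C.subtype) ≃ₗ[A] ↥C) := by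
    intro C
    have hbot : (⊥ : Submodule A M).comap C.subtype = ⊥ := by
      rw [Submodule.comap_bot, Submodule.ker_subtype]
    exact ⟨Submodule.quotEquivOfEqBot _ hbot⟩
  -- main: top factor vs a non-top factor
  have main_top : ∀ i j : Fin t.length, i.succ ≠ Fin.last t.length →
      j.succ = Fin.last t.length →
      JordanHolderModule.Iso (t i.castSucc, t i.succ) (t j.castSucc, t j.succ) → False := by
    intro i j hi hj hiso
    obtain ⟨C, hCN, hCinf, hCsup, hCatom, hCiso⟩ := hgen i hi
    obtain ⟨hjc, hjs⟩ := hlastfac j hj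
    have hIsoC : JordanHolderModule.Iso ((⊥ : Submodule A M), C) (N, ⊤) := by
      rw [← hjc, ← hjs]
      exact JordanHolderModule.iso_trans (JordanHolderModule.iso_symm hCiso) hiso
    obtain ⟨qe⟩ := hIsoC
    obtain ⟨e1⟩ := hbotpair C
    have htopmap : (N.comap (⊤ : Submodule A M).subtype).map
        (Submodule.topEquiv (R := A) (M := M) : ↥(⊤ : Submodule A M) →ₗ[A] M) = N := by
      ext m
      simp [Submodule.mem_map, Submodule.mem_comap]
    have e2 : (↥(⊤ : Submodule A M) ⧸ N.comap (⊤ : Submodule A M).subtype) ≃ₗ[A] (M ⧸ N) :=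
      Submodule.Quotient.equiv _ N Submodule.topEquiv htopmap
    have eC : ↥C ≃ₗ[A] τ := e1.symm.trans (qe.trans (e2.trans e))
    obtain ⟨f0, hf0⟩ := exists_proj N hCN
    obtain ⟨Φ, hΦ0, hΦadd, hΦsmul⟩ := extFact (k := k) τ τ N hNtop hNall e
    have hzero : eC.toLinearMap ∘ₗ f0 = 0 := by
      apply hΦ0
      haveI := hself
      exact Subsingleton.elim _ _
    obtain ⟨x0, hx0, hx0ne⟩ := Submodule.exists_mem_ne_zero_of_ne_bot hCatom.1
    have hx0N : x0 ∈ N := hCN hx0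
    have hfx : (f0 ⟨x0, hx0N⟩ : M) = x0 := hf0 ⟨x0, hx0N⟩ hx0
    have h5 := LinearMap.congr_fun hzero ⟨x0, hx0N⟩
    have h6 : eC (f0 ⟨x0, hx0N⟩) = 0 := h5
    have h7 : f0 ⟨x0, hx0N⟩ = 0 := by
      apply eC.injective
      rw [h6, map_zero]
    rw [h7] at hfx
    exact hx0ne (by rw [← hfx]; rfl)
  -- main: two non-top factors
  have main_mid : ∀ i j : Fin t.length, i < j → i.succ ≠ Fin.last t.length →
      j.succ ≠ Fin.last t.length →
      JordanHolderModule.Iso (t i.castSucc, t i.succ) (t j.castSucc, t j.succ) → False := by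
    intro i j hlt hi hj hiso
    obtain ⟨Ci, hCiN, hCiinf, hCisup, hCiatom, hCiiso⟩ := hgen i hi
    obtain ⟨Cj, hCjN, hCjinf, hCjsup, hCjatom, hCjiso⟩ := hgen j hj
    have hIso2 : JordanHolderModule.Iso ((⊥ : Submodule A M), Ci) (⊥, Cj) :=
      JordanHolderModule.iso_trans (JordanHolderModule.iso_symm hCiiso)
        (JordanHolderModule.iso_trans hiso hCjiso)
    obtain ⟨qe⟩ := hIso2
    obtain ⟨e1i⟩ := hbotpair Ci
    obtain ⟨e1j⟩ := hbotpair Cj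
    have eij : ↥Ci ≃ₗ[A] ↥Cj := e1i.symm.trans (qe.trans e1j)
    -- disjointness of Ci and Cj
    have hmono : t i.succ ≤ t j.castSucc := by
      apply t.strictMono.monotone
      rw [Fin.le_def]
      have := Fin.lt_def.mp hlt
      simpa using this
    have hdisj : Ci ⊓ Cj = ⊥ := by
      have h1 : Ci ≤ t j.castSucc := (le_sup_left.trans hCisup.le).trans hmono
      have h2 : Ci ⊓ Cj ≤ t j.castSucc ⊓ Cj := inf_le_inf_right _ h1
      rw [inf_comm (t j.castSucc) Cj, hCjinf] at h2
      exact le_bot_iff.mp h2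
    haveI hsimpσ : IsSimpleModule A ↥Cj := isSimpleModule_iff_isAtom.mpr hCjatom
    obtain ⟨fi0, fj0, hfi, hfj⟩ := exists_proj_pair N hCiN hCjN hdisj
    obtain ⟨Φ, hΦ0, hΦadd, hΦsmul⟩ := extFact (k := k) τ (↥Cj) N hNtop hNall e
    set fi : ↥N →ₗ[A] ↥Cj := eij.toLinearMap ∘ₗ fi0 with hfidef
    have hli : LinearIndependent k ![Φ fi, Φ fj0] := by
      rw [LinearIndependent.pair_iff]
      intro s tt hst
      have hcomb : Φ ((centralSmul (↥Cj) s).comp fi + (centralSmul (↥Cj) tt).comp fj0)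
          = s • Φ fi + tt • Φ fj0 := by
        rw [hΦadd, hΦsmul, hΦsmul]
      have hzero : (centralSmul (↥Cj) s).comp fi + (centralSmul (↥Cj) tt).comp fj0 = 0 :=
        hΦ0 _ (hcomb.trans hst)
      constructor
      · obtain ⟨x0, hx0, hx0ne⟩ := Submodule.exists_mem_ne_zero_of_ne_bot hCiatom.1
        have hx0N : x0 ∈ N := hCiN hx0
        have h5 := LinearMap.congr_fun hzero ⟨x0, hx0N⟩
        have hfj0x : fj0 ⟨x0, hx0N⟩ = 0 := (hfi ⟨x0, hx0N⟩ hx0).2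
        have h6 : algebraMap k A s • (eij (fi0 ⟨x0, hx0N⟩)) = 0 := by
          simpa [centralSmul, hfj0x, hfidef] using h5
        apply algebra_smul_eq_zero' h6
        intro hzero2
        have h7 : fi0 ⟨x0, hx0N⟩ = 0 := eij.injective (by rw [hzero2, map_zero])
        have h8 : (fi0 ⟨x0, hx0N⟩ : M) = x0 := (hfi ⟨x0, hx0N⟩ hx0).1
        rw [h7] at h8
        exact hx0ne (by rw [← h8]; rfl)
      · obtain ⟨x0, hx0, hx0ne⟩ := Submodule.exists_mem_ne_zero_of_ne_bot hCjatom.1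
        have hx0N : x0 ∈ N := hCjN hx0
        have h5 := LinearMap.congr_fun hzero ⟨x0, hx0N⟩
        have hfi0x : fi0 ⟨x0, hx0N⟩ = 0 := (hfj ⟨x0, hx0N⟩ hx0).2
        have h6 : algebraMap k A tt • (fj0 ⟨x0, hx0N⟩) = 0 := by
          simpa [centralSmul, hfidef, hfi0x] using h5
        apply algebra_smul_eq_zero' h6
        intro hzero2
        have h8 : (fj0 ⟨x0, hx0N⟩ : M) = x0 := (hfj ⟨x0, hx0N⟩ hx0).1
        rw [hzero2] at h8
        exact hx0ne (by rw [← h8]; rfl)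
    have h2le := hli.cardinal_lift_le_rank
    have hle1 := hext (↥Cj) hsimpσ
    rw [Cardinal.mk_fin] at h2le
    have h2le' : (2 : Cardinal) ≤ Module.rank k
        ((((Ext k (ModuleCat.{u} A) 1).obj (op (ModuleCat.of A τ))).obj
          (ModuleCat.of A ↥Cj)).carrier) := by
      simpa using h2le
    have : (2 : Cardinal) ≤ 1 := h2le'.trans hle1
    norm_num at this
  -- put the cases together
  intro i j hij hiso
  by_cases hi : i.succ = Fin.last t.length
  · by_cases hj : j.succ = Fin.last t.length
    · exact hij (Fin.succ_injective _ (hi.trans hj.symm))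
    · exact main_top j i hj hi (JordanHolderModule.iso_symm hiso)
  · by_cases hj : j.succ = Fin.last t.length
    · exact main_top i j hi hj hiso
    · rcases lt_or_gt_of_ne hij with h | h
      · exact main_mid i j h hi hj hiso
      · exact main_mid j i h hj hi (JordanHolderModule.iso_symm hiso)
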